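/- Let φ : [0,m] → ℝ be given by (1+τ)φ(τ) = −(A/6)τ⁴ − ((A+B)/3)τ³ − (B+2)τ² + Cτ + D. Then φ satisfies the extremal ODE [(1+τ)φ]'' = −2Aτ² − 2(A+B)τ − 2B − 4, equivalently the scalar curvature S(τ) = (1/(2(1+τ)))·(−4 − [(1+τ)φ]'') equals the affine function Aτ + B. Moreover, imposing φ(0) = φ(m) = 0, φ′(0) = 2, φ′(m) = −2 uniquely determines A, B, C, D, and yields φ(τ) = 2τ(m−τ)[(2m+2)τ² + (−m²+4m+6)τ + m²+6m+6] / (m(m²+6m+6)(1+τ)). -/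

import Mathlib

/-- The quartic `(1+τ)·φ(τ)` of the extremal ODE ansatz. -/
noncomputable def extremalQuartic (A B C D τ : ℝ) : ℝ :=
  -(A / 6) * τ ^ 4 - ((A + B) / 3) * τ ^ 3 - (B + 2) * τ ^ 2 + C * τ + D

/-- The momentum profile `φ(τ)` determined by `(1+τ)φ(τ) = extremalQuartic`. -/
noncomputable def extremalProfile (A B C D τ : ℝ) : ℝ :=
  extremalQuartic A B C D τ / (1 + τ)

lemma quartic_hasDerivAt (A B C D τ : ℝ) :
    HasDerivAt (extremalQuartic A B C D)
      (-(A / 6) * (4 * τ ^ 3) - ((A + B) / 3) * (3 * τ ^ 2) - (B + 2) * (2 * τ) + C) τ := by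
  have h := ((((hasDerivAt_pow 4 τ).const_mul (-(A / 6))).sub
      ((hasDerivAt_pow 3 τ).const_mul ((A + B) / 3))).sub
      ((hasDerivAt_pow 2 τ).const_mul (B + 2))).add
      (((hasDerivAt_id τ).const_mul C).add_const D)
  have hfun : (fun y : ℝ => (-(A / 6) * y ^ 4 - (A + B) / 3 * y ^ 3 - (B + 2) * y ^ 2) +
      (C * y + D)) = extremalQuartic A B C D := by
    funext y; simp [extremalQuartic]; ring
  have hval : -(A / 6) * (4 * τ ^ 3) - ((A + B) / 3) * (3 * τ ^ 2) - (B + 2) * (2 * τ) + C =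
      (-(A / 6) * (↑4 * τ ^ (4 - 1)) - (A + B) / 3 * (↑3 * τ ^ (3 - 1)) -
        (B + 2) * (↑2 * τ ^ (2 - 1))) + C * 1 := by push_cast; ring
  rw [← hfun, hval]
  exact h

lemma quartic_deriv (A B C D : ℝ) :
    deriv (extremalQuartic A B C D) = fun τ =>
      -(A / 6) * (4 * τ ^ 3) - ((A + B) / 3) * (3 * τ ^ 2) - (B + 2) * (2 * τ) + C := by
  funext τ; exact (quartic_hasDerivAt A B C D τ).deriv

lemma quartic_deriv2 (A B C D τ : ℝ) :
    deriv (deriv (extremalQuartic A B C D)) τ =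
      -2 * A * τ ^ 2 - 2 * (A + B) * τ - 2 * B - 4 := by
  rw [quartic_deriv]
  have h := (((((hasDerivAt_pow 3 τ).const_mul (-(A / 6) * 4)).sub
      ((hasDerivAt_pow 2 τ).const_mul ((A + B) / 3 * 3))).sub
      ((hasDerivAt_id τ).const_mul ((B + 2) * 2))).add_const C)
  have heq : (fun x : ℝ => -(A / 6) * 4 * x ^ 3 - (A + B) / 3 * 3 * x ^ 2 -
      (B + 2) * 2 * id x + C) = fun y : ℝ =>
      -(A / 6) * (4 * y ^ 3) - ((A + B) / 3) * (3 * y ^ 2) - (B + 2) * (2 * y) + C := by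
    funext y; simp only [id_eq]; ring
  replace h : HasDerivAt (fun x : ℝ => -(A / 6) * 4 * x ^ 3 - (A + B) / 3 * 3 * x ^ 2 -
      (B + 2) * 2 * id x + C) _ τ := h
  rw [heq] at h
  rw [h.deriv]
  push_cast; ring

lemma profile_hasDerivAt (A B C D τ : ℝ) (hτ : 1 + τ ≠ 0) :
    HasDerivAt (extremalProfile A B C D)
      (((-(A / 6) * (4 * τ ^ 3) - ((A + B) / 3) * (3 * τ ^ 2) - (B + 2) * (2 * τ) + C) * (1 + τ)
        - extremalQuartic A B C D τ * 1) / (1 + τ) ^ 2) τ := by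
  have hden : HasDerivAt (fun y : ℝ => 1 + y) 1 τ := by
    simpa using (hasDerivAt_id τ).const_add 1
  exact (quartic_hasDerivAt A B C D τ).div hden hτ

/-- the quartic ansatz satisfies
`[(1+τ)φ]'' = −2Aτ² − 2(A+B)τ − 2B − 4`, equivalently the scalar curvature
`S(τ) = (1/(2(1+τ)))(−4 − [(1+τ)φ]'')` equals `Aτ + B`; and the boundary
conditions `φ(0) = φ(m) = 0`, `φ′(0) = 2`, `φ′(m) = −2` determine the constants,
yielding the displayed closed form for `φ`. -/
theorem stmt_17 (m : ℝ) (hm : 0 < m) (A B C D : ℝ) :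
    (∀ τ : ℝ, deriv (deriv (extremalQuartic A B C D)) τ =
      -2 * A * τ ^ 2 - 2 * (A + B) * τ - 2 * B - 4) ∧
    (∀ τ : ℝ, 1 + τ ≠ 0 →
      1 / (2 * (1 + τ)) * (-4 - deriv (deriv (extremalQuartic A B C D)) τ) =
        A * τ + B) ∧
    (extremalProfile A B C D 0 = 0 → extremalProfile A B C D m = 0 →
      HasDerivAt (extremalProfile A B C D) 2 0 →
      HasDerivAt (extremalProfile A B C D) (-2) m →
      ∀ τ : ℝ, 1 + τ ≠ 0 →
        extremalProfile A B C D τ =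
          2 * τ * (m - τ) *
              ((2 * m + 2) * τ ^ 2 + (-m ^ 2 + 4 * m + 6) * τ + m ^ 2 + 6 * m + 6) /
            (m * (m ^ 2 + 6 * m + 6) * (1 + τ))) := by
  refine ⟨fun τ => quartic_deriv2 A B C D τ, fun τ hτ => ?_, ?_⟩
  · rw [quartic_deriv2]; field_simp; ring
  · intro h0 hmval h2 hm2 τ hτ
    have hm0 : m ≠ 0 := ne_of_gt hm
    have hK : m ^ 2 + 6 * m + 6 ≠ 0 := by positivity
    have h1m : (1 : ℝ) + m ≠ 0 := by positivity
    -- D = 0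
    have hD : D = 0 := by
      have := h0
      simp [extremalProfile, extremalQuartic] at this
      exact this
    -- C = 2
    have hC : C = 2 := by
      have h10 : (1 : ℝ) + (0 : ℝ) ≠ 0 := by norm_num
      have := h2.unique (profile_hasDerivAt A B C D 0 h10)
      simp [extremalQuartic, hD] at this
      linarith
    -- Q(m) = 0
    have hQm : extremalQuartic A B C D m = 0 := by
      have := hmval
      simp only [extremalProfile, div_eq_zero_iff] at this
      rcases this with h | h
      · exact h
      · exact absurd h h1m
    -- Q'(m) = -2 (1 + m)
    have hQ'm : -(A / 6) * (4 * m ^ 3) - ((A + B) / 3) * (3 * m ^ 2) - (B + 2) * (2 * m) + C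
        = -2 * (1 + m) := by
      have h := hm2.unique (profile_hasDerivAt A B C D m h1m)
      rw [hQm] at h
      have h2m : ((1 : ℝ) + m) ^ 2 ≠ 0 := pow_ne_zero 2 h1m
      rw [eq_div_iff h2m] at h
      apply mul_right_cancel₀ h1m
      linear_combination -h
    -- expand the two constraints as polynomial equations
    have E1 : -(A / 6) * m ^ 4 - ((A + B) / 3) * m ^ 3 - (B + 2) * m ^ 2 + 2 * m = 0 := by
      have := hQm; rw [extremalQuartic, hC, hD] at this; linarith
    have E2 : -(A / 6) * (4 * m ^ 3) - ((A + B) / 3) * (3 * m ^ 2) - (B + 2) * (2 * m) + 2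
        = -2 * (1 + m) := by linear_combination hQ'm - hC
    -- solve the linear system
    have hA : A * (m * (m ^ 2 + 6 * m + 6)) = 24 * (m + 1) := by
      have key : (A * (m * (m ^ 2 + 6 * m + 6)) - 24 * (m + 1)) *
          (m ^ 4 * (m ^ 2 + 6 * m + 6)) = 0 := by
        linear_combination (18 * (m * (m ^ 2 + 6 * m + 6)) * (m ^ 2 + 2 * m)) * E1 +
          (-6 * (m * (m ^ 2 + 6 * m + 6)) * m ^ 2 * (m + 3)) * E2
      have hnz : m ^ 4 * (m ^ 2 + 6 * m + 6) ≠ 0 := by positivity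
      have := mul_eq_zero.mp key
      rcases this with h | h
      · linarith [sub_eq_zero.mp h]
      · exact absurd h hnz
    have hB : B * (m * (m ^ 2 + 6 * m + 6)) = 12 - 12 * m - 18 * m ^ 2 := by
      have key : (B * (m * (m ^ 2 + 6 * m + 6)) - (12 - 12 * m - 18 * m ^ 2)) *
          (m ^ 4 * (m ^ 2 + 6 * m + 6)) = 0 := by
        linear_combination (-6 * (m * (m ^ 2 + 6 * m + 6)) * m ^ 2 * (3 + 2 * m)) * E1 +
          (3 * (m * (m ^ 2 + 6 * m + 6)) * m ^ 3 * (m + 2)) * E2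
      have hnz : m ^ 4 * (m ^ 2 + 6 * m + 6) ≠ 0 := by positivity
      have := mul_eq_zero.mp key
      rcases this with h | h
      · linarith [sub_eq_zero.mp h]
      · exact absurd h hnz
    -- final identity
    rw [extremalProfile, extremalQuartic, hC, hD]
    rw [div_eq_div_iff hτ (by
      apply mul_ne_zero _ hτ
      exact mul_ne_zero hm0 hK)]
    linear_combination ((-(1 / 6) * τ ^ 4 - (1 / 3) * τ ^ 3) * (1 + τ)) * hA +
      ((-(1 / 3) * τ ^ 3 - τ ^ 2) * (1 + τ)) * hB
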